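/- Let d = pⁿ with p prime and n ≥ 2, and let B₀, …, B_p be p+1 pairwise mutually unbiased orthonormal product bases of (ℂ^p)^{⊗n} such that, for each bipartition into the r-th factor ℂ^p and the remaining factors ℂ^{p^{n−1}}, each basis B_b has the form {v ⊗ w(v, v̄)} with {v} ranging over an orthonormal basis of the r-th factor ℂ^p and, for each v, {w(v, v̄)} an orthonormal basis of ℂ^{p^{n−1}}. If a unit vector μ ∈ (ℂ^p)^{⊗n} is mutually unbiased to every B_b, then μ is maximally entangled across every bipartition ℂ^p ⊗ ℂ^{p^{n−1}}: for each r = 1…n, the partial trace of |μ⟩⟨μ| over all factors except the r-th equals (1/p)·𝟙 on ℂ^p. -/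

import Mathlib

open scoped ComplexInnerProductSpace

/-- The tensor product `ψ¹ ⊗ ⋯ ⊗ ψⁿ` of `n` vectors, realized concretely on
`EuclideanSpace`: its component at the multi-index `f` is `∏ r, ψ r (f r)`. -/
noncomputable def eprodPi {n : ℕ} {D : Fin n → ℕ}
    (ψ : (r : Fin n) → EuclideanSpace ℂ (Fin (D r))) :
    EuclideanSpace ℂ ((r : Fin n) → Fin (D r)) :=
  WithLp.toLp 2 (fun f => ∏ r, ψ r (f r))

/-- The tensor product of a vector in the `r`-th factor `ℂ^p` with a vector in the
remaining factors, realized concretely on `(ℂ^p)^{⊗n}`. -/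
noncomputable def tensAt {n p : ℕ} (r : Fin n) (x : EuclideanSpace ℂ (Fin p))
    (y : EuclideanSpace ℂ ({s : Fin n // s ≠ r} → Fin p)) :
    EuclideanSpace ℂ (Fin n → Fin p) :=
  WithLp.toLp 2 (fun f => x (f r) * y (fun s => f s.1))

/-- The multi-index of `(ℂ^p)^{⊗n}` obtained by assigning `i` at the `r`-th factor and
`g` elsewhere. -/
def extendAt {n p : ℕ} (r : Fin n) (i : Fin p)
    (g : {s : Fin n // s ≠ r} → Fin p) : Fin n → Fin p :=
  fun s => if h : s = r then i else g ⟨s, h⟩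

/-- The reduced density matrix of the pure state `μ` of `(ℂ^p)^{⊗n}` on the `r`-th
factor, i.e. the partial trace of the projector `|μ⟩⟨μ|` over all factors except the
`r`-th. -/
noncomputable def reducedDensityMatrixAt {n p : ℕ} (r : Fin n)
    (μ : EuclideanSpace ℂ (Fin n → Fin p)) : Matrix (Fin p) (Fin p) ℂ :=
  Matrix.of fun i j => ∑ g : {s : Fin n // s ≠ r} → Fin p,
    μ (extendAt r i g) * star (μ (extendAt r j g))

open Finset

-- inner product of EuclideanSpace, componentwise
lemma einner {ι : Type*} [Fintype ι] (x y : EuclideanSpace ℂ ι) :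
    ⟪x, y⟫ = ∑ i, (starRingEnd ℂ) (x i) * y i := by
  simp [PiLp.inner_apply, RCLike.inner_apply]
  exact Finset.sum_congr rfl fun _ _ => mul_comm _ _

lemma extendAt_fst {n p : ℕ} (r : Fin n) (i : Fin p) (g : {s : Fin n // s ≠ r} → Fin p) :
    extendAt r i g r = i := by simp [extendAt]

lemma extendAt_rest {n p : ℕ} (r : Fin n) (i : Fin p) (g : {s : Fin n // s ≠ r} → Fin p) :
    (fun s : {s : Fin n // s ≠ r} => extendAt r i g s.1) = g := by
  funext s; simp [extendAt, s.2]

/-- the splitting equivalence -/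
def splitAt {n p : ℕ} (r : Fin n) :
    (Fin n → Fin p) ≃ Fin p × ({s : Fin n // s ≠ r} → Fin p) where
  toFun f := (f r, fun s => f s.1)
  invFun ig := extendAt r ig.1 ig.2
  left_inv f := by
    funext s
    by_cases h : s = r
    · subst h; simp [extendAt]
    · simp [extendAt, h]
  right_inv := by
    rintro ⟨i, g⟩
    exact Prod.ext (extendAt_fst r i g) (extendAt_rest r i g)

lemma tensAt_apply_extend {n p : ℕ} (r : Fin n) (x : EuclideanSpace ℂ (Fin p))
    (y : EuclideanSpace ℂ ({s : Fin n // s ≠ r} → Fin p)) (i : Fin p)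
    (g : {s : Fin n // s ≠ r} → Fin p) :
    tensAt r x y (extendAt r i g) = x i * y g := by
  show x (extendAt r i g r) * y (fun s => extendAt r i g s.1) = x i * y g
  rw [extendAt_fst, extendAt_rest]

lemma inner_tensAt {n p : ℕ} (r : Fin n) (x x' : EuclideanSpace ℂ (Fin p))
    (y y' : EuclideanSpace ℂ ({s : Fin n // s ≠ r} → Fin p)) :
    ⟪tensAt r x y, tensAt r x' y'⟫ = ⟪x, x'⟫ * ⟪y, y'⟫ := by
  rw [einner, einner, einner]
  rw [← Equiv.sum_comp (splitAt r).symm]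
  rw [Fintype.sum_prod_type]
  rw [Finset.sum_mul_sum]
  refine Finset.sum_congr rfl fun i _ => Finset.sum_congr rfl fun g _ => ?_
  show (starRingEnd ℂ) (tensAt r x y (extendAt r i g)) * tensAt r x' y' (extendAt r i g) = _
  rw [tensAt_apply_extend, tensAt_apply_extend]
  simp only [map_mul]
  ring

lemma inner_tensAt_mu {n p : ℕ} (r : Fin n) (u : EuclideanSpace ℂ (Fin p))
    (y : EuclideanSpace ℂ ({s : Fin n // s ≠ r} → Fin p))
    (μ : EuclideanSpace ℂ (Fin n → Fin p)) :
    ⟪tensAt r u y, μ⟫ =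
      ⟪y, (WithLp.toLp 2 (fun g => ∑ i, (starRingEnd ℂ) (u i) * μ (extendAt r i g)) :
        EuclideanSpace ℂ ({s : Fin n // s ≠ r} → Fin p))⟫ := by
  rw [einner, einner]
  simp only [WithLp.ofLp_toLp]
  rw [← Equiv.sum_comp (splitAt r).symm]
  rw [Fintype.sum_prod_type]
  rw [Finset.sum_comm]
  refine Finset.sum_congr rfl fun g _ => ?_
  rw [Finset.mul_sum]
  refine Finset.sum_congr rfl fun i _ => ?_
  show (starRingEnd ℂ) (tensAt r u y (extendAt r i g)) * μ (extendAt r i g) = _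
  rw [tensAt_apply_extend]
  simp only [map_mul]
  ring

/-- complex Parseval for an orthonormal family of full cardinality -/
lemma parseval {ι : Type*} [Fintype ι] [DecidableEq ι]
    {w : ι → EuclideanSpace ℂ ι} (hw : Orthonormal ℂ w) (ξ : EuclideanSpace ℂ ι) :
    ∑ g, ⟪ξ, w g⟫ * ⟪w g, ξ⟫ = ⟪ξ, ξ⟫ := by
  have hspan : ⊤ ≤ Submodule.span ℂ (Set.range w) := by
    rw [hw.linearIndependent.span_eq_top_of_card_eq_finrank'
      (by simp [finrank_euclideanSpace])]
  have := (OrthonormalBasis.mk hw hspan).sum_inner_mul_inner ξ ξ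
  simp only [OrthonormalBasis.coe_mk] at this
  exact this

lemma conj_mul_self_eq (z : ℂ) : (starRingEnd ℂ) z * z = ((‖z‖ ^ 2 : ℝ) : ℂ) := by
  rw [← Complex.normSq_eq_conj_mul_self, Complex.normSq_eq_norm_sq]


lemma core_zero {p : ℕ} (hp : p ≠ 0) {E : Type*} [NormedAddCommGroup E]
    [InnerProductSpace ℂ E] [FiniteDimensional ℂ E]
    (hdim : Module.finrank ℂ E = p * p)
    (P : Fin (p + 1) → Fin p → E) (t : ℂ)
    (hGram : ∀ b x b' x', ⟪P b x, P b' x'⟫ =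
      if b = b' then (if x = x' then 1 else 0) else t)
    (A : E) (hA : ∀ b x, ⟪P b x, A⟫ = 0) : A = 0 := by
  obtain ⟨q, rfl⟩ : ∃ q, p = q + 1 := ⟨p - 1, by omega⟩
  set ι := Fin (q + 1) ⊕ (Fin (q + 1) × Fin q) with hι
  set Q : ι → E := Sum.elim (P 0) (fun bx => P bx.1.succ bx.2.succ) with hQ
  have hQind : LinearIndependent ℂ Q := by
    rw [Fintype.linearIndependent_iff]
    intro c hc
    have key : ∀ (b' : Fin (q + 2)) (x' : Fin (q + 1)),
        (∑ i, c i * ⟪P b' x', Q i⟫) = 0 := by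
      intro b' x'
      have h2 := congrArg (fun z => (⟪P b' x', z⟫ : ℂ)) hc
      simp only [inner_sum, inner_smul_right, inner_zero_right] at h2
      exact h2
    set Sl := ∑ x, c (Sum.inl x) with hSl
    set SB : Fin (q + 1) → ℂ := fun b => ∑ x, c (Sum.inr (b, x)) with hSB
    set S' := ∑ b, SB b with hS'
    -- equation at (0, x')
    have e0 : ∀ x' : Fin (q + 1), c (Sum.inl x') + S' * t = 0 := by
      intro x'
      have hk := key 0 x'
      rw [Fintype.sum_sum_type] at hk
      simp only [hQ, Sum.elim_inl, Sum.elim_inr, hGram, (Fin.succ_ne_zero _).symm,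
        if_false, if_true, eq_self_iff_true] at hk
      rw [Fintype.sum_prod_type] at hk
      have h1 : (∑ x, c (Sum.inl x) * if x' = x then (1:ℂ) else 0) = c (Sum.inl x') := by
        simp [mul_ite]
      have h2 : ∑ x : Fin (q+1), ∑ y : Fin q, c (Sum.inr (x, y)) * t = S' * t := by
        rw [hS', Finset.sum_mul]
        exact Finset.sum_congr rfl fun b _ => by rw [hSB, Finset.sum_mul]
      rw [h1, h2] at hk
      exact hk
    -- equation at (b.succ, x')
    have eb : ∀ (b : Fin (q + 1)) (x' : Fin (q + 1)),
        Sl * t + (S' * t + ((∑ y : Fin q, c (Sum.inr (b, y)) *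
          (if x' = y.succ then (1:ℂ) else 0)) - SB b * t)) = 0 := by
      intro b x'
      have hk := key b.succ x'
      rw [Fintype.sum_sum_type] at hk
      simp only [hQ, Sum.elim_inl, Sum.elim_inr, hGram, Fin.succ_ne_zero,
        if_false, Fin.succ_inj] at hk
      rw [Fintype.sum_prod_type] at hk
      have h1 : (∑ x, c (Sum.inl x) * t) = Sl * t := by rw [hSl, Finset.sum_mul]
      have h3 : ∀ b'' : Fin (q+1),
          (∑ y : Fin q, c (Sum.inr (b'', y)) *
            (if b = b'' then (if x' = y.succ then (1:ℂ) else 0) else t))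
          = SB b'' * t + (if b = b'' then
              ((∑ y : Fin q, c (Sum.inr (b'', y)) * (if x' = y.succ then (1:ℂ) else 0))
                - SB b'' * t) else 0) := by
        intro b''
        by_cases h : b = b''
        · simp only [h, if_true]; ring
        · simp only [h, if_false, add_zero, hSB, Finset.sum_mul]
      rw [h1] at hk
      rw [Finset.sum_congr rfl (fun b'' _ => h3 b'')] at hk
      rw [Finset.sum_add_distrib, Finset.sum_ite_eq, if_pos (Finset.mem_univ b),
        ← Finset.sum_mul, ← hSB, ← hS'] at hk
      linear_combination hk
    have hcz : ∀ b z, c (Sum.inr (b, z)) = 0 := by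
      intro b z
      have h1 := eb b 0
      have h2 := eb b z.succ
      have h3 : (∑ y : Fin q, c (Sum.inr (b, y)) * (if (0 : Fin (q+1)) = y.succ then (1:ℂ) else 0)) = 0 := by
        refine Finset.sum_eq_zero fun y _ => ?_
        rw [if_neg (Fin.succ_ne_zero y).symm, mul_zero]
      have h4 : (∑ y : Fin q, c (Sum.inr (b, y)) * (if z.succ = y.succ then (1:ℂ) else 0))
          = c (Sum.inr (b, z)) := by
        simp [Fin.succ_inj, mul_ite]
      rw [h3] at h1
      rw [h4] at h2
      linear_combination h2 - h1
    have hSB0 : ∀ b, SB b = 0 := fun b => by simp [hSB, hcz]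
    have hS'0 : S' = 0 := by simp [hS', hSB0]
    intro i
    rcases i with x | bz
    · have := e0 x
      rw [hS'0, zero_mul, add_zero] at this
      exact this
    · exact hcz bz.1 bz.2
  have hcard : Fintype.card ι = (q+1)*(q+1) := by
    simp [hι]; ring
  have hspan : Submodule.span ℂ (Set.range Q) = ⊤ :=
    hQind.span_eq_top_of_card_eq_finrank' (by rw [hcard, hdim])
  have hmem : A ∈ Submodule.span ℂ (Set.range Q) := hspan ▸ Submodule.mem_top
  obtain ⟨d, hd⟩ := (Submodule.mem_span_range_iff_exists_fun ℂ).mp hmem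
  have hzero : (⟪A, A⟫ : ℂ) = 0 := by
    have h5 : (⟪A, A⟫ : ℂ) = ⟪∑ i, d i • Q i, A⟫ := by rw [hd]
    rw [h5, sum_inner]
    refine Finset.sum_eq_zero fun i _ => ?_
    rw [inner_smul_left]
    rcases i with x | bx
    · simp [hQ, hA]
    · simp [hQ, hA]
  exact inner_self_eq_zero.mp hzero


/-- Let `d = pⁿ`, `p` prime, `n ≥ 2`, and let `B₀, …, B_p` be `p + 1` pairwise mutually
unbiased orthonormal product bases of `(ℂ^p)^{⊗n}` such that for every bipartition into
the `r`-th factor and the rest, each basis `B_b` has the form `{v ⊗ w(v, v̄)}` with `{v}`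
an orthonormal basis of `ℂ^p` and, for each `v`, `{w(v, ·)}` an orthonormal basis of
`ℂ^{p^{n-1}}`. Any unit vector `μ` mutually unbiased to every `B_b` is maximally
entangled across every bipartition `ℂ^p ⊗ ℂ^{p^{n-1}}`. -/
theorem vector_MU_to_maximal_product_set_maximally_entangled_all_bipartitions
    {p n : ℕ} (hp : p.Prime) (hn : 2 ≤ n)
    (ψ : Fin (p + 1) → Fin (p ^ n) → Fin n → EuclideanSpace ℂ (Fin p))
    (hψ : ∀ b i r, ‖ψ b i r‖ = 1)
    (hON : ∀ b, Orthonormal ℂ (fun i => eprodPi (ψ b i)))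
    (hMU : ∀ b b', b ≠ b' → ∀ i j,
      ‖⟪eprodPi (ψ b i), eprodPi (ψ b' j)⟫‖ ^ 2 = 1 / ((p ^ n : ℕ) : ℝ))
    (hstruct : ∀ (r : Fin n) (b : Fin (p + 1)),
      ∃ (v : Fin p → EuclideanSpace ℂ (Fin p))
        (w : Fin p → ({s : Fin n // s ≠ r} → Fin p) →
          EuclideanSpace ℂ ({s : Fin n // s ≠ r} → Fin p))
        (σ : Fin (p ^ n) ≃ Fin p × (({s : Fin n // s ≠ r} → Fin p))),
        Orthonormal ℂ v ∧ (∀ x, Orthonormal ℂ (w x)) ∧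
        ∀ i, eprodPi (ψ b i) = tensAt r (v (σ i).1) (w (σ i).1 (σ i).2))
    (μ : EuclideanSpace ℂ (Fin n → Fin p)) (hμ : ‖μ‖ = 1)
    (hμMU : ∀ b i, ‖⟪eprodPi (ψ b i), μ⟫‖ ^ 2 = 1 / ((p ^ n : ℕ) : ℝ)) :
    ∀ r : Fin n,
      reducedDensityMatrixAt r μ = ((p : ℂ))⁻¹ • (1 : Matrix (Fin p) (Fin p) ℂ) := by
  intro r
  have hpc0 : (p : ℂ) ≠ 0 := by exact_mod_cast hp.ne_zero
  choose v w σ hv hw heq using hstruct r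
  have hcard1 : Fintype.card {s : Fin n // s ≠ r} = n - 1 := by
    rw [Fintype.card_subtype_compl, Fintype.card_subtype_eq]
    simp
  have hcardG : Fintype.card ({s : Fin n // s ≠ r} → Fin p) = p ^ (n - 1) := by
    simp [Fintype.card_fun, hcard1]
  have hconst : (∑ _g : ({s : Fin n // s ≠ r} → Fin p),
      (((1 / ((p ^ n : ℕ) : ℝ)) : ℝ) : ℂ)) = (p : ℂ)⁻¹ := by
    rw [Finset.sum_const, nsmul_eq_mul, Finset.card_univ, hcardG]
    push_cast
    rw [one_div]
    have hpn : (p : ℂ) ^ n = (p : ℂ) ^ (n - 1) * p := by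
      rw [← pow_succ]; congr 1; omega
    rw [hpn, mul_inv, ← mul_assoc, mul_inv_cancel₀ (pow_ne_zero _ hpc0), one_mul]
  -- Key 1 : diagonal values of the reduced density matrix in each basis v b
  have key1 : ∀ b x, (∑ i, ∑ j, (starRingEnd ℂ) (v b x i) * v b x j *
      reducedDensityMatrixAt r μ i j) = (p : ℂ)⁻¹ := by
    intro b x
    set ξ : EuclideanSpace ℂ ({s : Fin n // s ≠ r} → Fin p) :=
      WithLp.toLp 2 (fun g => ∑ i, (starRingEnd ℂ) (v b x i) * μ (extendAt r i g)) with hξ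
    have hz : ∀ g, ⟪ξ, w b x g⟫ * ⟪w b x g, ξ⟫ = (((1 / ((p ^ n : ℕ) : ℝ)) : ℝ) : ℂ) := by
      intro g
      set i := (σ b).symm (x, g) with hi
      have he : eprodPi (ψ b i) = tensAt r (v b x) (w b x g) := by
        have h := heq b i
        rw [hi, Equiv.apply_symm_apply] at h
        exact h
      have hn' := congrArg Complex.ofReal (hμMU b i)
      rw [← conj_mul_self_eq, he, inner_tensAt_mu] at hn'
      rw [← inner_conj_symm]
      exact hn'
    have hsum := parseval (hw b x) ξ
    rw [Finset.sum_congr rfl (fun g _ => hz g), hconst] at hsum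
    have hg : ∀ g, (starRingEnd ℂ) (ξ g) * ξ g
        = ∑ i, ∑ j, (starRingEnd ℂ) (v b x i) * v b x j *
            (μ (extendAt r i g) * (starRingEnd ℂ) (μ (extendAt r j g))) := by
      intro g
      rw [hξ]
      show (starRingEnd ℂ) (∑ a, (starRingEnd ℂ) (v b x a) * μ (extendAt r a g)) *
        (∑ j, (starRingEnd ℂ) (v b x j) * μ (extendAt r j g)) = _
      rw [map_sum, Finset.sum_mul_sum, Finset.sum_comm]
      refine Finset.sum_congr rfl fun i _ => Finset.sum_congr rfl fun j _ => ?_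
      simp only [map_mul, Complex.conj_conj]
      ring
    have hexp : (⟪ξ, ξ⟫ : ℂ) = ∑ i, ∑ j, (starRingEnd ℂ) (v b x i) * v b x j *
        reducedDensityMatrixAt r μ i j := by
      rw [einner]
      rw [Finset.sum_congr rfl (fun g _ => hg g)]
      rw [Finset.sum_comm]
      refine Finset.sum_congr rfl fun i _ => ?_
      rw [Finset.sum_comm]
      refine Finset.sum_congr rfl fun j _ => ?_
      show _ = _ * reducedDensityMatrixAt r μ i j
      rw [reducedDensityMatrixAt]
      simp only [Matrix.of_apply]
      rw [Finset.mul_sum]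
      rfl
    rw [hsum, hexp]
  -- Key 2 : the bases v b are mutually unbiased
  have key2 : ∀ b b', b ≠ b' → ∀ x x',
      (starRingEnd ℂ) ⟪v b x, v b' x'⟫ * ⟪v b x, v b' x'⟫ = (p : ℂ)⁻¹ := by
    intro b b' hbb' x x'
    set g₀ : {s : Fin n // s ≠ r} → Fin p := fun _ => ⟨0, hp.pos⟩ with hg₀
    set y := w b x g₀ with hy'
    have hyy : (⟪y, y⟫ : ℂ) = 1 := by
      rw [inner_self_eq_norm_sq_to_K, (hw b x).1 g₀]
      norm_num
    have hz : ∀ g', ((starRingEnd ℂ) ⟪v b x, v b' x'⟫ * ⟪v b x, v b' x'⟫) *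
        (⟪y, w b' x' g'⟫ * ⟪w b' x' g', y⟫)
        = (((1 / ((p ^ n : ℕ) : ℝ)) : ℝ) : ℂ) := by
      intro g'
      set i := (σ b).symm (x, g₀) with hi
      set j := (σ b').symm (x', g') with hj
      have hei : eprodPi (ψ b i) = tensAt r (v b x) y := by
        have h := heq b i
        rw [hi, Equiv.apply_symm_apply] at h
        exact h
      have hej : eprodPi (ψ b' j) = tensAt r (v b' x') (w b' x' g') := by
        have h := heq b' j
        rw [hj, Equiv.apply_symm_apply] at h
        exact h
      have hn' := congrArg Complex.ofReal (hMU b b' hbb' i j)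
      rw [← conj_mul_self_eq, hei, hej, inner_tensAt, map_mul] at hn'
      rw [← hn']
      have h2 : (⟪w b' x' g', y⟫ : ℂ) = (starRingEnd ℂ) ⟪y, w b' x' g'⟫ :=
        (inner_conj_symm _ _).symm
      rw [h2]
      ring
    have hsum := parseval (hw b' x') y
    have hfin : ((starRingEnd ℂ) ⟪v b x, v b' x'⟫ * ⟪v b x, v b' x'⟫) * ⟪y, y⟫
        = (p : ℂ)⁻¹ := by
      rw [← hsum, Finset.mul_sum, Finset.sum_congr rfl (fun g' _ => hz g')]
      exact hconst
    rwa [hyy, mul_one] at hfin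
  -- the matrices P b x as vectors of ℂ^(p × p)
  set P : Fin (p + 1) → Fin p → EuclideanSpace ℂ (Fin p × Fin p) :=
    fun b x => WithLp.toLp 2 (fun ij : Fin p × Fin p => v b x ij.1 * (starRingEnd ℂ) (v b x ij.2)) with hP
  have hPinner : ∀ b x b' x', (⟪P b x, P b' x'⟫ : ℂ)
      = ⟪v b x, v b' x'⟫ * (starRingEnd ℂ) ⟪v b x, v b' x'⟫ := by
    intro b x b' x'
    rw [einner, Fintype.sum_prod_type]
    have h1 : (⟪v b x, v b' x'⟫ : ℂ) = ∑ i, (starRingEnd ℂ) (v b x i) * v b' x' i :=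
      einner _ _
    have h2 : (starRingEnd ℂ) (⟪v b x, v b' x'⟫ : ℂ)
        = ∑ j, v b x j * (starRingEnd ℂ) (v b' x' j) := by
      rw [einner, map_sum]
      refine Finset.sum_congr rfl fun j _ => ?_
      simp only [map_mul, Complex.conj_conj]
    rw [h2, h1, Finset.sum_mul_sum]
    refine Finset.sum_congr rfl fun i _ => Finset.sum_congr rfl fun j _ => ?_
    show (starRingEnd ℂ) (v b x i * (starRingEnd ℂ) (v b x j)) *
      (v b' x' i * (starRingEnd ℂ) (v b' x' j)) = _
    simp only [map_mul, Complex.conj_conj]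
    ring
  have hGram : ∀ b x b' x', (⟪P b x, P b' x'⟫ : ℂ)
      = if b = b' then (if x = x' then 1 else 0) else (p : ℂ)⁻¹ := by
    intro b x b' x'
    rw [hPinner]
    by_cases hbb : b = b'
    · subst hbb
      rw [orthonormal_iff_ite.mp (hv b) x x']
      by_cases hxx : x = x' <;> simp [hxx]
    · rw [if_neg hbb, mul_comm]
      exact key2 b b' hbb x x'
  set A : EuclideanSpace ℂ (Fin p × Fin p) :=
    WithLp.toLp 2 (fun ij : Fin p × Fin p => reducedDensityMatrixAt r μ ij.1 ij.2 -
      (if ij.1 = ij.2 then (p : ℂ)⁻¹ else 0)) with hAdef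
  have hvv : ∀ b x, (∑ i, (starRingEnd ℂ) (v b x i) * v b x i) = 1 := by
    intro b x
    rw [← einner, orthonormal_iff_ite.mp (hv b) x x, if_pos rfl]
  have hA : ∀ b x, (⟪P b x, A⟫ : ℂ) = 0 := by
    intro b x
    rw [einner, Fintype.sum_prod_type]
    have h1 : ∀ i j : Fin p, (starRingEnd ℂ) (P b x (i, j)) * A (i, j)
        = (starRingEnd ℂ) (v b x i) * v b x j * reducedDensityMatrixAt r μ i j
          - (if i = j then (starRingEnd ℂ) (v b x i) * v b x j * (p : ℂ)⁻¹ else 0) := by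
      intro i j
      show (starRingEnd ℂ) (v b x i * (starRingEnd ℂ) (v b x j)) *
        (reducedDensityMatrixAt r μ i j - (if i = j then (p : ℂ)⁻¹ else 0)) = _
      by_cases h : i = j
      · simp only [h, if_true, eq_self_iff_true, map_mul, Complex.conj_conj]
        ring
      · simp only [h, if_false, sub_zero, map_mul, Complex.conj_conj]
        try ring
    rw [Finset.sum_congr rfl (fun i _ => Finset.sum_congr rfl (fun j _ => h1 i j))]
    rw [Finset.sum_congr rfl (fun i _ => Finset.sum_sub_distrib _ _), Finset.sum_sub_distrib]
    rw [key1 b x]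
    have h2 : ∀ i : Fin p, (∑ j, if i = j then
        (starRingEnd ℂ) (v b x i) * v b x j * (p : ℂ)⁻¹ else 0)
        = (starRingEnd ℂ) (v b x i) * v b x i * (p : ℂ)⁻¹ := by
      intro i
      rw [Finset.sum_ite_eq]
      simp
    rw [Finset.sum_congr rfl (fun i _ => h2 i)]
    have h3 : (∑ i, (starRingEnd ℂ) (v b x i) * v b x i * (p : ℂ)⁻¹) = (p : ℂ)⁻¹ := by
      rw [← Finset.sum_mul, hvv b x, one_mul]
    rw [h3, sub_self]
  have hdim : Module.finrank ℂ (EuclideanSpace ℂ (Fin p × Fin p)) = p * p := by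
    simp [finrank_euclideanSpace]
  have hA0 := core_zero hp.ne_zero hdim P ((p : ℂ))⁻¹ hGram A hA
  ext i j
  have hij := congrArg (fun z : EuclideanSpace ℂ (Fin p × Fin p) => z (i, j)) hA0
  have hij' : reducedDensityMatrixAt r μ i j - (if i = j then (p : ℂ)⁻¹ else 0) = 0 := hij
  rw [sub_eq_zero] at hij'
  rw [hij', Matrix.smul_apply, Matrix.one_apply]
  by_cases h : i = j <;> simp [h]
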